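/- (Reformulation identity, Eq. (5).) Let Ξ ⊆ ℝ^m be a nonempty closed set, let ξ₁,…,ξ_N ∈ Ξ, let P̂_N := (1/N)∑_{i=1}^N δ_{ξ_i}, let g : Ξ → ℝ be continuous, and let k ≥ 0. Then, with equality in the extended reals ℝ ∪ {+∞}: sup_P { ∫_Ξ g dP − k·d_W(P, P̂_N) } = (1/N)·∑_{i=1}^N sup_{z ∈ Ξ} ( g(z) − k·‖ξ_i − z‖₂ ), where the outer supremum ranges over all Borel probability measures P on Ξ with finite first moment under which g is integrable. -/

import Mathlib

open MeasureTheory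

noncomputable section

abbrev Vec (m : ℕ) := EuclideanSpace ℝ (Fin m)

/-- A coupling of two Borel probability measures on `Vec m`. -/
def IsCoupling {m : ℕ} (γ : Measure (Vec m × Vec m)) (P Q : Measure (Vec m)) : Prop :=
  IsProbabilityMeasure γ ∧ γ.map Prod.fst = P ∧ γ.map Prod.snd = Q

/-- Type-1 Wasserstein distance: infimum of `∫ ‖ξ₁ - ξ₂‖₂ dγ` over couplings `γ`. -/
noncomputable def wDist {m : ℕ} (P Q : Measure (Vec m)) : ℝ :=
  sInf {c : ℝ | ∃ γ : Measure (Vec m × Vec m), IsCoupling γ P Q ∧ c = ∫ p, ‖p.1 - p.2‖ ∂γ}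

/-- `(x, k)` is RS-feasible for reference value `τ` with respect to `Phat`. -/
def RSFeasible {m : ℕ} {X : Type*} (h : X → Vec m → ℝ)
    (Phat : Measure (Vec m)) (τ : ℝ) (x : X) (k : ℝ) : Prop :=
  0 ≤ k ∧ ∀ P : Measure (Vec m), IsProbabilityMeasure P →
    Integrable (fun ξ => ‖ξ‖) P → (∫ ξ, h x ξ ∂P) - τ ≤ k * wDist P Phat

/-- Empirical measure `(1/N) ∑ δ_{x i}`. -/
noncomputable def empMeas {m N : ℕ} (xs : Fin N → Vec m) : Measure (Vec m) :=
  (N : ENNReal)⁻¹ • ∑ i : Fin N, Measure.dirac (xs i)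

/-! ### Auxiliary lemmas -/

lemma rs_integrable_dirac {α : Type*} [MeasurableSpace α] [MeasurableSingletonClass α]
    (f : α → ℝ) (a : α) : Integrable f (Measure.dirac a) := by
  have hae : f =ᶠ[ae (Measure.dirac a)] (fun _ => f a) := by
    rw [Filter.EventuallyEq, ae_iff]
    refine measure_mono_null (fun x hx => ?_) (t := {a}ᶜ) ?_
    · simp only [Set.mem_setOf_eq] at hx
      intro h
      exact hx (by simp only [Set.mem_singleton_iff] at h; rw [h])
    · rw [Measure.dirac_apply' _ (measurableSet_singleton a).compl]
      simp
  refine ⟨(aestronglyMeasurable_const (b := f a)).congr hae.symm, ?_⟩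
  simp [HasFiniteIntegral, lintegral_dirac]

lemma rs_map_sum {α β ι : Type*} [MeasurableSpace α] [MeasurableSpace β] {f : α → β}
    (hf : Measurable f) (μ : ι → Measure α) (s : Finset ι) :
    (∑ i ∈ s, μ i).map f = ∑ i ∈ s, (μ i).map f := by
  ext t ht
  rw [Measure.map_apply hf ht, Measure.finset_sum_apply, Measure.finset_sum_apply]
  simp_rw [Measure.map_apply hf ht]

lemma rs_integrable_emp {α : Type*} [MeasurableSpace α] [MeasurableSingletonClass α]
    {N : ℕ} (hN : 0 < N) (zs : Fin N → α) (f : α → ℝ) :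
    Integrable f ((N : ENNReal)⁻¹ • ∑ i : Fin N, Measure.dirac (zs i)) := by
  rw [integrable_smul_measure (ENNReal.inv_ne_zero.mpr (by simp))
    (ENNReal.inv_ne_top.mpr (by exact_mod_cast hN.ne'))]
  exact integrable_finset_sum_measure.mpr fun i _ => rs_integrable_dirac f (zs i)

lemma rs_integral_emp {α : Type*} [MeasurableSpace α] [MeasurableSingletonClass α]
    {N : ℕ} (zs : Fin N → α) (f : α → ℝ) :
    ∫ x, f x ∂((N : ENNReal)⁻¹ • ∑ i : Fin N, Measure.dirac (zs i))
      = (N : ℝ)⁻¹ * ∑ i : Fin N, f (zs i) := by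
  rw [integral_smul_measure, integral_finset_sum_measure (fun i _ => rs_integrable_dirac f (zs i))]
  simp [integral_dirac, ENNReal.toReal_inv, smul_eq_mul]

lemma rs_prob_emp {α : Type*} [MeasurableSpace α]
    {N : ℕ} (hN : 0 < N) (zs : Fin N → α) :
    IsProbabilityMeasure ((N : ENNReal)⁻¹ • ∑ i : Fin N, Measure.dirac (zs i)) := by
  constructor
  rw [Measure.smul_apply, Measure.finset_sum_apply]
  simp only [measure_univ, Finset.sum_const, Finset.card_univ, Fintype.card_fin, nsmul_eq_mul,
    mul_one, smul_eq_mul]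
  exact ENNReal.inv_mul_cancel (by exact_mod_cast hN.ne') (by simp)

lemma rs_coe_sum {ι : Type*} (s : Finset ι) (f : ι → ℝ) :
    ((∑ i ∈ s, f i : ℝ) : EReal) = ∑ i ∈ s, ((f i : ℝ) : EReal) := by
  induction s using Finset.cons_induction with
  | empty => simp
  | cons a s h ih => rw [Finset.sum_cons, Finset.sum_cons, EReal.coe_add, ih]

lemma rs_biSup_coe_bdd {α : Type*} {s : Set α} (hs : s.Nonempty) {f : α → ℝ}
    (hb : BddAbove (f '' s)) :
    (⨆ z ∈ s, ((f z : ℝ) : EReal)) = ((sSup (f '' s) : ℝ) : EReal) := by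
  apply le_antisymm
  · exact iSup₂_le fun z hz => EReal.coe_le_coe_iff.mpr (le_csSup hb ⟨z, hz, rfl⟩)
  · by_contra hcon
    obtain ⟨x, hx1, hx2⟩ := EReal.lt_iff_exists_real_btwn.mp (lt_of_not_ge hcon)
    obtain ⟨r, ⟨z, hz, rfl⟩, hxr⟩ :=
      exists_lt_of_lt_csSup (hs.image f) (EReal.coe_lt_coe_iff.mp hx2)
    have h1 : ((f z : ℝ) : EReal) ≤ ⨆ z ∈ s, ((f z : ℝ) : EReal) :=
      le_iSup₂ (f := fun z _ => ((f z : ℝ) : EReal)) z hz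
    exact absurd (EReal.coe_lt_coe_iff.mp (lt_of_le_of_lt h1 hx1)) (not_lt.mpr hxr.le)

lemma rs_biSup_coe_unbdd {α : Type*} {s : Set α} {f : α → ℝ} (hb : ¬ BddAbove (f '' s)) :
    (⨆ z ∈ s, ((f z : ℝ) : EReal)) = ⊤ := by
  by_contra hcon
  obtain ⟨x, hx1, _⟩ := EReal.lt_iff_exists_real_btwn.mp (lt_top_iff_ne_top.mpr hcon)
  refine hb ⟨x, ?_⟩
  rintro r ⟨z, hz, rfl⟩
  have h1 : ((f z : ℝ) : EReal) ≤ ⨆ z ∈ s, ((f z : ℝ) : EReal) :=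
    le_iSup₂ (f := fun z _ => ((f z : ℝ) : EReal)) z hz
  exact EReal.coe_le_coe_iff.mp (h1.trans hx1.le)

/-- Reformulation identity, Eq. (5): in the extended reals,
sup_P { int g dP - k d_W(P, Phat_N) } = (1/N) sum_i sup_{z in Xi} (g z - k |xi_i - z|),
the supremum ranging over Borel probability measures on Xi with finite first moment
under which g is integrable. -/
theorem rs_reformulation_identity {m N : ℕ} (hN : 0 < N)
    (Ξ : Set (Vec m)) (hΞne : Ξ.Nonempty) (hΞcl : IsClosed Ξ)
    (ξs : Fin N → Vec m) (hξs : ∀ i, ξs i ∈ Ξ)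
    (g : Vec m → ℝ) (hg : ContinuousOn g Ξ)
    (k : ℝ) (hk : 0 ≤ k) :
    (⨆ P ∈ {P : Measure (Vec m) | IsProbabilityMeasure P ∧ P Ξᶜ = 0 ∧
        Integrable (fun ξ => ‖ξ‖) P ∧ Integrable g P},
      (((∫ ξ, g ξ ∂P) - k * wDist P (empMeas ξs) : ℝ) : EReal)) =
      (((N : ℝ)⁻¹ : ℝ) : EReal) *
        ∑ i : Fin N, ⨆ z ∈ Ξ, ((g z - k * ‖ξs i - z‖ : ℝ) : EReal) := by
  have hNR : (N : ℝ) ≠ 0 := by exact_mod_cast hN.ne'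
  set Phat : Measure (Vec m) := empMeas ξs with hPhatdef
  have hPhatprob : IsProbabilityMeasure Phat := rs_prob_emp hN ξs
  have hPhatnorm : Integrable (fun ξ => ‖ξ‖) Phat := rs_integrable_emp hN ξs _
  set S : Set (Measure (Vec m)) := {P : Measure (Vec m) | IsProbabilityMeasure P ∧ P Ξᶜ = 0 ∧
      Integrable (fun ξ => ‖ξ‖) P ∧ Integrable g P} with hSdef
  set A : Vec m → Set ℝ := fun y => (fun z => g z - k * ‖y - z‖) '' Ξ with hAdef
  have hAne : ∀ y, (A y).Nonempty := fun y => hΞne.image _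
  have hAtrans : ∀ y y', BddAbove (A y) → BddAbove (A y') := by
    rintro y y' ⟨b, hb⟩
    refine ⟨b + k * ‖y' - y‖, ?_⟩
    rintro r ⟨z, hz, rfl⟩
    have h1 : g z - k * ‖y - z‖ ≤ b := hb ⟨z, hz, rfl⟩
    have h2 : ‖y - z‖ ≤ ‖y - y'‖ + ‖y' - z‖ := norm_sub_le_norm_sub_add_norm_sub _ _ _
    have h3 : ‖y - y'‖ = ‖y' - y‖ := norm_sub_rev _ _
    show g z - k * ‖y' - z‖ ≤ b + k * ‖y' - y‖
    nlinarith [mul_le_mul_of_nonneg_left h2 hk]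
  -- key lower bound
  have keylb : ∀ zs : Fin N → Vec m, (∀ i, zs i ∈ Ξ) →
      ((((N : ℝ)⁻¹ * ∑ i : Fin N, (g (zs i) - k * ‖ξs i - zs i‖) : ℝ)) : EReal) ≤
        ⨆ P ∈ S, (((∫ ξ, g ξ ∂P) - k * wDist P Phat : ℝ) : EReal) := by
    intro zs hzs
    set P : Measure (Vec m) := (N : ENNReal)⁻¹ • ∑ i : Fin N, Measure.dirac (zs i) with hPdef
    have hPprob : IsProbabilityMeasure P := rs_prob_emp hN zs
    have hPcomp : P Ξᶜ = 0 := by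
      have hd : ∀ i : Fin N, Measure.dirac (zs i) Ξᶜ = 0 := fun i => by
        rw [Measure.dirac_apply' _ hΞcl.measurableSet.compl]
        simp [hzs i]
      rw [hPdef, Measure.smul_apply, Measure.finset_sum_apply]
      simp [hd]
    have hPmem : P ∈ S := ⟨hPprob, hPcomp, rs_integrable_emp hN zs _, rs_integrable_emp hN zs g⟩
    have hW : wDist P Phat ≤ (N : ℝ)⁻¹ * ∑ i : Fin N, ‖zs i - ξs i‖ := by
      apply csInf_le
      · refine ⟨0, ?_⟩
        rintro c ⟨γ, _, rfl⟩
        exact integral_nonneg fun p => norm_nonneg _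
      · refine ⟨(N : ENNReal)⁻¹ • ∑ i : Fin N, Measure.dirac (zs i, ξs i),
          ⟨rs_prob_emp hN _, ?_, ?_⟩, ?_⟩
        · rw [Measure.map_smul, rs_map_sum measurable_fst]
          simp_rw [Measure.map_dirac' measurable_fst]
          rfl
        · rw [Measure.map_smul, rs_map_sum measurable_snd]
          simp_rw [Measure.map_dirac' measurable_snd]
          rfl
        · rw [rs_integral_emp]
    have h1 : ∫ ξ, g ξ ∂P = (N : ℝ)⁻¹ * ∑ i : Fin N, g (zs i) := rs_integral_emp zs g
    have h2 : k * wDist P Phat ≤ k * ((N : ℝ)⁻¹ * ∑ i : Fin N, ‖zs i - ξs i‖) :=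
      mul_le_mul_of_nonneg_left hW hk
    have h3 : (N : ℝ)⁻¹ * ∑ i : Fin N, (g (zs i) - k * ‖ξs i - zs i‖)
        = (N : ℝ)⁻¹ * ∑ i : Fin N, g (zs i)
          - k * ((N : ℝ)⁻¹ * ∑ i : Fin N, ‖zs i - ξs i‖) := by
      have e : ∀ i : Fin N, g (zs i) - k * ‖ξs i - zs i‖ = g (zs i) - k * ‖zs i - ξs i‖ :=
        fun i => by rw [norm_sub_rev (ξs i)]
      rw [Finset.sum_congr rfl fun i _ => e i, Finset.sum_sub_distrib, mul_sub]
      congr 1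
      rw [Finset.mul_sum, Finset.mul_sum, Finset.mul_sum]
      exact Finset.sum_congr rfl fun i _ => by ring
    have hval : (N : ℝ)⁻¹ * ∑ i : Fin N, (g (zs i) - k * ‖ξs i - zs i‖)
        ≤ ∫ ξ, g ξ ∂P - k * wDist P Phat := by
      rw [h3, h1]
      linarith
    exact le_trans (EReal.coe_le_coe_iff.mpr hval)
      (le_iSup₂_of_le P hPmem (le_refl _))
  by_cases hbdd : ∀ y, BddAbove (A y)
  · -- bounded case
    set H : Vec m → ℝ := fun y => sSup (A y) with hHdef
    have hle : ∀ y z, z ∈ Ξ → g z - k * ‖y - z‖ ≤ H y := fun y z hz =>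
      le_csSup (hbdd y) ⟨z, hz, rfl⟩
    have hlip : ∀ y y', H y ≤ H y' + k * ‖y - y'‖ := by
      intro y y'
      apply csSup_le (hAne y)
      rintro r ⟨z, hz, rfl⟩
      have h1 := hle y' z hz
      have htri : ‖y' - z‖ ≤ ‖y' - y‖ + ‖y - z‖ := norm_sub_le_norm_sub_add_norm_sub _ _ _
      have h2 : ‖y - y'‖ = ‖y' - y‖ := norm_sub_rev _ _
      show g z - k * ‖y - z‖ ≤ H y' + k * ‖y - y'‖
      nlinarith [mul_le_mul_of_nonneg_left htri hk]
    have hHcont : Continuous H := by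
      have : LipschitzWith (Real.toNNReal k) H := by
        apply LipschitzWith.of_dist_le_mul
        intro x y
        rw [Real.dist_eq, dist_eq_norm, Real.coe_toNNReal k hk, abs_sub_le_iff]
        constructor
        · linarith [hlip x y]
        · have := hlip y x
          rw [norm_sub_rev] at this
          linarith
      exact this.continuous
    set R : ℝ := (N : ℝ)⁻¹ * ∑ i : Fin N, H (ξs i) with hRdef
    have hRHS : ((((N : ℝ)⁻¹ : ℝ)) : EReal) *
        ∑ i : Fin N, ⨆ z ∈ Ξ, ((g z - k * ‖ξs i - z‖ : ℝ) : EReal) = ((R : ℝ) : EReal) := by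
      have hterm : ∀ i : Fin N, (⨆ z ∈ Ξ, ((g z - k * ‖ξs i - z‖ : ℝ) : EReal))
          = ((H (ξs i) : ℝ) : EReal) := fun i =>
        rs_biSup_coe_bdd hΞne (f := fun z => g z - k * ‖ξs i - z‖) (hbdd (ξs i))
      rw [Finset.sum_congr rfl fun i _ => hterm i, ← rs_coe_sum, ← EReal.coe_mul]
    rw [hRHS]
    -- upper bound
    have hub : ∀ P, P ∈ S → ∫ ξ, g ξ ∂P - k * wDist P Phat ≤ R := by
      rintro P ⟨hPprob, hPsupp, hPnorm, hPg⟩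
      haveI := hPprob
      set W : Set ℝ := {c : ℝ | ∃ γ : Measure (Vec m × Vec m),
        IsCoupling γ P Phat ∧ c = ∫ p, ‖p.1 - p.2‖ ∂γ} with hWdef
      have hWne : W.Nonempty := by
        refine ⟨_, ⟨P.prod Phat, ⟨inferInstance, ?_, ?_⟩, rfl⟩⟩
        · rw [Measure.map_fst_prod]; simp [measure_univ]
        · rw [Measure.map_snd_prod]; simp [measure_univ]
      have hcoup : ∀ c ∈ W, ∫ ξ, g ξ ∂P ≤ R + k * c := by
        rintro c ⟨γ, ⟨hγprob, hγ1, hγ2⟩, rfl⟩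
        haveI := hγprob
        have hfst : AEMeasurable (Prod.fst : Vec m × Vec m → Vec m) γ :=
          measurable_fst.aemeasurable
        have hgsm : AEStronglyMeasurable g (γ.map Prod.fst) := by rw [hγ1]; exact hPg.1
        have hgint : Integrable (fun p : Vec m × Vec m => g p.1) γ :=
          (integrable_map_measure hgsm hfst).mp (by rw [hγ1]; exact hPg)
        have hnint1 : Integrable (fun p : Vec m × Vec m => ‖p.1‖) γ :=
          (integrable_map_measure (by rw [hγ1]; exact hPnorm.1) hfst).mp
            (by rw [hγ1]; exact hPnorm)
        have hnint2 : Integrable (fun p : Vec m × Vec m => ‖p.2‖) γ :=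
          (integrable_map_measure (by rw [hγ2]; exact hPhatnorm.1)
            measurable_snd.aemeasurable).mp (by rw [hγ2]; exact hPhatnorm)
        have hnint : Integrable (fun p : Vec m × Vec m => ‖p.1 - p.2‖) γ := by
          refine Integrable.mono (hnint1.add hnint2)
            ((continuous_fst.sub continuous_snd).norm.aestronglyMeasurable) ?_
          filter_upwards with p
          simp only [Pi.add_apply, Real.norm_eq_abs, abs_norm]
          rw [abs_of_nonneg (add_nonneg (norm_nonneg p.1) (norm_nonneg p.2))]
          exact norm_sub_le _ _
        have hHint : Integrable (fun p : Vec m × Vec m => H p.2) γ := by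
          refine Integrable.mono ((integrable_const |H 0|).add (hnint2.const_mul k))
            ((hHcont.comp continuous_snd).aestronglyMeasurable) ?_
          filter_upwards with p
          simp only [Pi.add_apply, Real.norm_eq_abs]
          rw [abs_of_nonneg (add_nonneg (abs_nonneg (H 0)) (mul_nonneg hk (norm_nonneg p.2)))]
          have h1 := hlip p.2 0
          have h2 := hlip 0 p.2
          rw [sub_zero] at h1
          rw [zero_sub, norm_neg] at h2
          rw [abs_le]
          constructor
          · linarith [neg_abs_le (H 0)]
          · linarith [le_abs_self (H 0)]
        have hae : ∀ᵐ p ∂γ, g p.1 - k * ‖p.1 - p.2‖ ≤ H p.2 := by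
          have hnull : γ {p : Vec m × Vec m | p.1 ∉ Ξ} = 0 := by
            have heq : {p : Vec m × Vec m | p.1 ∉ Ξ} = Prod.fst ⁻¹' Ξᶜ := rfl
            rw [heq, ← Measure.map_apply measurable_fst hΞcl.measurableSet.compl, hγ1, hPsupp]
          rw [ae_iff]
          refine measure_mono_null (fun p hp => ?_) hnull
          simp only [Set.mem_setOf_eq] at hp ⊢
          intro hmem
          have := hle p.2 p.1 hmem
          rw [norm_sub_rev p.2 p.1] at this
          exact hp this
        have hmono : ∫ p, (g p.1 - k * ‖p.1 - p.2‖) ∂γ ≤ ∫ p, H p.2 ∂γ :=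
          integral_mono_ae (hgint.sub (hnint.const_mul k)) hHint hae
        have e1 : ∫ p, (g p.1 - k * ‖p.1 - p.2‖) ∂γ
            = ∫ p, g p.1 ∂γ - k * ∫ p, ‖p.1 - p.2‖ ∂γ := by
          rw [integral_sub hgint (hnint.const_mul k), integral_const_mul]
        have e2 : ∫ ξ, g ξ ∂P = ∫ p, g p.1 ∂γ := by
          rw [← hγ1, integral_map hfst hgsm]
        have e3 : ∫ p, H p.2 ∂γ = ∫ y, H y ∂Phat := by
          rw [← hγ2, integral_map measurable_snd.aemeasurable
            (hHcont.aestronglyMeasurable.mono_measure le_rfl)]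
        have e4 : ∫ y, H y ∂Phat = (N : ℝ)⁻¹ * ∑ i : Fin N, H (ξs i) := rs_integral_emp ξs H
        rw [e1] at hmono
        rw [e2, hRdef]
        linarith [hmono, e3 ▸ e4]
      have hwd : wDist P Phat = sInf W := rfl
      have hfin : ∀ ε : ℝ, 0 < ε → ∫ ξ, g ξ ∂P - k * wDist P Phat ≤ R + ε := by
        intro ε hε
        obtain ⟨c, hcW, hclt⟩ := Real.lt_sInf_add_pos hWne
          (show (0 : ℝ) < ε / (k + 1) by positivity)
        have h1 := hcoup c hcW
        have h2 : sInf W ≥ c - ε / (k + 1) := by linarith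
        have h3 : k * (c - ε / (k + 1)) ≤ k * sInf W := mul_le_mul_of_nonneg_left h2 hk
        have h4 : k * (ε / (k + 1)) ≤ ε := by
          rw [mul_div_assoc']
          rw [div_le_iff₀ (by linarith)]
          nlinarith
        rw [hwd]
        nlinarith
      exact le_of_forall_pos_le_add hfin
    apply le_antisymm
    · exact iSup₂_le fun P hP => EReal.coe_le_coe_iff.mpr (hub P hP)
    · by_contra hcon
      obtain ⟨x, hx1, hx2⟩ := EReal.lt_iff_exists_real_btwn.mp (lt_of_not_ge hcon)
      have hε : 0 < R - x := by
        have := EReal.coe_lt_coe_iff.mp hx2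
        linarith
      have hch : ∀ i : Fin N, ∃ z ∈ Ξ, H (ξs i) - (R - x) < g z - k * ‖ξs i - z‖ := by
        intro i
        obtain ⟨r, ⟨z, hz, rfl⟩, hr⟩ := exists_lt_of_lt_csSup (hAne (ξs i))
          (show H (ξs i) - (R - x) < sSup (A (ξs i)) from sub_lt_self _ hε)
        exact ⟨z, hz, hr⟩
      choose zs hzsΞ hzslt using hch
      have hkey := keylb zs hzsΞ
      have hsum : R - (R - x) ≤ (N : ℝ)⁻¹ * ∑ i : Fin N, (g (zs i) - k * ‖ξs i - zs i‖) := by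
        have hsum2 : ∑ i : Fin N, (H (ξs i) - (R - x))
            ≤ ∑ i : Fin N, (g (zs i) - k * ‖ξs i - zs i‖) :=
          Finset.sum_le_sum fun i _ => (hzslt i).le
        have hsum3 : ∑ i : Fin N, (H (ξs i) - (R - x))
            = ∑ i : Fin N, H (ξs i) - N * (R - x) := by
          rw [Finset.sum_sub_distrib]
          simp [Finset.sum_const, Finset.card_univ, nsmul_eq_mul]
          ring
        have h5 : R - (R - x) = (N : ℝ)⁻¹ * (∑ i : Fin N, H (ξs i) - N * (R - x)) := by
          rw [mul_sub, ← hRdef]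
          congr 1
          field_simp
        rw [h5]
        apply mul_le_mul_of_nonneg_left _ (by positivity)
        linarith [hsum2, hsum3]
      have hfin : ((R - (R - x) : ℝ) : EReal) ≤ ((x : ℝ) : EReal) := by
        calc ((R - (R - x) : ℝ) : EReal)
            ≤ (((N : ℝ)⁻¹ * ∑ i : Fin N, (g (zs i) - k * ‖ξs i - zs i‖) : ℝ) : EReal) :=
              EReal.coe_le_coe_iff.mpr hsum
          _ ≤ ⨆ P ∈ S, (((∫ ξ, g ξ ∂P) - k * wDist P Phat : ℝ) : EReal) := hkey
          _ ≤ ((x : ℝ) : EReal) := hx1.le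
      have : R - (R - x) ≤ x := EReal.coe_le_coe_iff.mp hfin
      -- fine, this is an equality, no contradiction yet; use strictness
      have hstrict : (⨆ P ∈ S, (((∫ ξ, g ξ ∂P) - k * wDist P Phat : ℝ) : EReal)) < ((x : ℝ) : EReal) := hx1
      have : ((R - (R - x) : ℝ) : EReal) < ((x : ℝ) : EReal) :=
        lt_of_le_of_lt (le_trans (EReal.coe_le_coe_iff.mpr hsum) hkey) hstrict
      have hxx : R - (R - x) = x := by ring
      rw [hxx] at this
      exact lt_irrefl _ this
  · -- unbounded case
    obtain ⟨y₀, hy₀⟩ := not_forall.mp hbdd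
    have hunb : ∀ y, ¬ BddAbove (A y) := fun y hy => hy₀ (hAtrans y y₀ hy)
    have hRHS : ((((N : ℝ)⁻¹ : ℝ)) : EReal) *
        ∑ i : Fin N, ⨆ z ∈ Ξ, ((g z - k * ‖ξs i - z‖ : ℝ) : EReal) = ⊤ := by
      have hterm : ∀ i : Fin N, (⨆ z ∈ Ξ, ((g z - k * ‖ξs i - z‖ : ℝ) : EReal)) = ⊤ :=
        fun i => rs_biSup_coe_unbdd (f := fun z => g z - k * ‖ξs i - z‖) (hunb (ξs i))
      rw [Finset.sum_congr rfl fun i _ => hterm i]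
      have hsumtop : ∑ _i : Fin N, (⊤ : EReal) = ⊤ :=
        le_antisymm le_top (Finset.single_le_sum (f := fun _ : Fin N => (⊤ : EReal))
          (fun i _ => le_top) (Finset.mem_univ ⟨0, hN⟩))
      rw [hsumtop]
      exact EReal.mul_top_of_pos (EReal.coe_pos.mpr (by positivity))
    rw [hRHS, eq_top_iff]
    by_contra hcon
    obtain ⟨M, hM1, _⟩ := EReal.lt_iff_exists_real_btwn.mp (lt_of_not_ge hcon)
    have hch : ∀ i : Fin N, ∃ z ∈ Ξ, M < g z - k * ‖ξs i - z‖ := by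
      intro i
      obtain ⟨r, ⟨z, hz, rfl⟩, hr⟩ := (not_bddAbove_iff.mp (hunb (ξs i))) M
      exact ⟨z, hz, hr⟩
    choose zs hzsΞ hzslt using hch
    have hkey := keylb zs hzsΞ
    have hsum : M ≤ (N : ℝ)⁻¹ * ∑ i : Fin N, (g (zs i) - k * ‖ξs i - zs i‖) := by
      have hsum2 : ∑ i : Fin N, M ≤ ∑ i : Fin N, (g (zs i) - k * ‖ξs i - zs i‖) :=
        Finset.sum_le_sum fun i _ => (hzslt i).le
      have hsum3 : (∑ _i : Fin N, M : ℝ) = N * M := by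
        simp [Finset.sum_const, Finset.card_univ, nsmul_eq_mul]
      have h5 : M = (N : ℝ)⁻¹ * (N * M) := by field_simp
      rw [h5]
      exact mul_le_mul_of_nonneg_left (by linarith [hsum2, hsum3]) (by positivity)
    have : ((M : ℝ) : EReal) < ((M : ℝ) : EReal) :=
      lt_of_le_of_lt (le_trans (EReal.coe_le_coe_iff.mpr hsum) hkey) hM1
    exact lt_irrefl _ this
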